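/- For every real a ≥ 0, the function t ↦ arccosh(1 + a(1 − cos t)) is concave on the interval [0, π]. -/

import Mathlib

/-- The inverse hyperbolic cosine, defined (for `x ≥ 1`) by
`arcosh x = log (x + sqrt (x² − 1))`. -/
noncomputable def arcosh (x : ℝ) : ℝ :=
  Real.log (x + Real.sqrt (x ^ 2 - 1))

open Real hiding arcosh
open Set

/-- `arsinh` is monotone. -/
lemma arsinh_monotone : Monotone Real.arsinh := fun _ _ h =>
  Real.arsinh_le_arsinh.2 h

/-- `arsinh` is concave on `[0, ∞)`. -/
lemma concaveOn_arsinh : ConcaveOn ℝ (Ici (0 : ℝ)) Real.arsinh := by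
  apply AntitoneOn.concaveOn_of_deriv (convex_Ici 0)
    Real.continuous_arsinh.continuousOn
    (fun x _ => (Real.hasDerivAt_arsinh x).differentiableAt.differentiableWithinAt)
  intro x hx y hy hxy
  rw [interior_Ici] at hx hy
  rw [(Real.hasDerivAt_arsinh x).deriv, (Real.hasDerivAt_arsinh y).deriv]
  have h1 : (0:ℝ) < Real.sqrt (1 + x ^ 2) := Real.sqrt_pos.2 (by positivity)
  have h2 : Real.sqrt (1 + x ^ 2) ≤ Real.sqrt (1 + y ^ 2) := by
    apply Real.sqrt_le_sqrt
    nlinarith [(show (0:ℝ) < x from hx).le, (show (0:ℝ) < y from hy).le]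
  exact inv_anti₀ h1 h2

/-- Monotone-concave composition with explicit maps-to hypothesis. -/
lemma concaveOn_comp' {s t : Set ℝ} {g f : ℝ → ℝ} (hg : ConcaveOn ℝ t g)
    (hf : ConcaveOn ℝ s f) (hmono : Monotone g) (hmaps : ∀ x ∈ s, f x ∈ t) :
    ConcaveOn ℝ s (fun x => g (f x)) := by
  refine ⟨hf.1, fun x hx y hy a b ha hb hab => ?_⟩
  calc a • g (f x) + b • g (f y) ≤ g (a • f x + b • f y) :=
        hg.2 (hmaps x hx) (hmaps y hy) ha hb hab
    _ ≤ g (f (a • x + b • y)) := hmono (hf.2 hx hy ha hb hab)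

/-- The key identity: `arcosh (1 + 2 y²) = 2 arsinh y` for `y ≥ 0`. -/
lemma arcosh_eq_two_arsinh {y : ℝ} (hy : 0 ≤ y) :
    arcosh (1 + 2 * y ^ 2) = 2 * Real.arsinh y := by
  have hs : (0:ℝ) ≤ 1 + y ^ 2 := by positivity
  have hsq : Real.sqrt (1 + y ^ 2) ^ 2 = 1 + y ^ 2 := Real.sq_sqrt hs
  have hroot : Real.sqrt ((1 + 2 * y ^ 2) ^ 2 - 1) = 2 * y * Real.sqrt (1 + y ^ 2) := by
    rw [show (1 + 2 * y ^ 2) ^ 2 - 1 = (2 * y * Real.sqrt (1 + y ^ 2)) ^ 2 by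
      rw [mul_pow, mul_pow, hsq]; ring]
    exact Real.sqrt_sq (by positivity)
  have hz : (0:ℝ) < y + Real.sqrt (1 + y ^ 2) := by
    have : (0:ℝ) < Real.sqrt (1 + y ^ 2) := Real.sqrt_pos.2 (by positivity)
    linarith
  rw [arcosh, Real.arsinh, hroot,
    show 1 + 2 * y ^ 2 + 2 * y * Real.sqrt (1 + y ^ 2)
        = (y + Real.sqrt (1 + y ^ 2)) ^ 2 by nlinarith [hsq],
    Real.log_pow]
  push_cast
  ring

/-- `t ↦ √a · sin (t/2)` is concave on `[0, π]`. -/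
lemma concaveOn_sqrt_sin_half (a : ℝ) :
    ConcaveOn ℝ (Icc (0:ℝ) π) (fun t => Real.sqrt a * Real.sin (t / 2)) := by
  have haff : ConcaveOn ℝ (Icc (0:ℝ) π) (fun t => Real.sin (t / 2)) := by
    refine ⟨convex_Icc _ _, fun x hx y hy p q hp hq hpq => ?_⟩
    have hx' : x / 2 ∈ Icc (0:ℝ) π :=
      ⟨by linarith [hx.1], by linarith [hx.2, Real.pi_pos.le]⟩
    have hy' : y / 2 ∈ Icc (0:ℝ) π :=
      ⟨by linarith [hy.1], by linarith [hy.2, Real.pi_pos.le]⟩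
    have := strictConcaveOn_sin_Icc.concaveOn.2 hx' hy' hp hq hpq
    simpa [smul_eq_mul, add_div, mul_div_assoc] using this
  have := haff.smul (Real.sqrt_nonneg a)
  simpa [smul_eq_mul] using this

/-- for `a ≥ 0`, the function `t ↦ arcosh(1 + a(1 − cos t))`
is concave on `[0, π]`. -/
theorem concaveOn_arcosh_one_add (a : ℝ) (ha : 0 ≤ a) :
    ConcaveOn ℝ (Set.Icc (0 : ℝ) Real.pi)
      (fun t => arcosh (1 + a * (1 - Real.cos t))) := by
  -- the inner function `t ↦ √a sin(t/2)` is nonnegative on `[0,π]`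
  have hnn : ∀ t ∈ Icc (0:ℝ) π, (0:ℝ) ≤ Real.sqrt a * Real.sin (t / 2) := by
    intro t ht
    have : (0:ℝ) ≤ Real.sin (t / 2) :=
      Real.sin_nonneg_of_nonneg_of_le_pi (by linarith [ht.1])
        (by linarith [ht.2, Real.pi_pos.le])
    positivity
  -- pointwise identity on `[0,π]`
  have hEq : ∀ t ∈ Icc (0:ℝ) π,
      arcosh (1 + a * (1 - Real.cos t))
        = 2 * Real.arsinh (Real.sqrt a * Real.sin (t / 2)) := by
    intro t ht
    have hcos : Real.cos t = 1 - 2 * Real.sin (t / 2) ^ 2 := by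
      have h1 := Real.cos_two_mul' (t / 2)
      rw [show 2 * (t / 2) = t by ring] at h1
      have h2 := Real.sin_sq_add_cos_sq (t / 2)
      linarith
    have harg : 1 + a * (1 - Real.cos t)
        = 1 + 2 * (Real.sqrt a * Real.sin (t / 2)) ^ 2 := by
      rw [hcos, mul_pow, Real.sq_sqrt ha]; ring
    rw [harg, arcosh_eq_two_arsinh (hnn t ht)]
  -- concavity of `t ↦ 2 arsinh (√a sin (t/2))`
  have hconc : ConcaveOn ℝ (Icc (0:ℝ) π)
      (fun t => 2 * Real.arsinh (Real.sqrt a * Real.sin (t / 2))) := by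
    have hcomp : ConcaveOn ℝ (Icc (0:ℝ) π)
        (fun t => Real.arsinh (Real.sqrt a * Real.sin (t / 2))) :=
      concaveOn_comp' concaveOn_arsinh (concaveOn_sqrt_sin_half a)
        arsinh_monotone hnn
    have := hcomp.smul (by norm_num : (0:ℝ) ≤ 2)
    simpa [smul_eq_mul] using this
  -- transfer along the pointwise equality
  refine ⟨convex_Icc _ _, fun x hx y hy p q hp hq hpq => ?_⟩
  have hmem : p • x + q • y ∈ Icc (0:ℝ) π := (convex_Icc _ _) hx hy hp hq hpq
  dsimp only
  rw [hEq x hx, hEq y hy, hEq _ hmem]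
  exact hconc.2 hx hy hp hq hpq
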